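/- The map ζ that reverses words and swaps the letters x and y permutes the set of Catalan words and preserves the Catalan coefficient: for every Catalan word w, ζ(w) is Catalan and C(ζ(w)) = C(w), where C(a_1⋯a_{2n}) = ∏_{i=0}^{2n} [1 + ā_1 + ⋯ + ā_i]_q. Consequently ζ fixes the Catalan element C_n = ∑_{w ∈ Cat_n} w · C(w) for all n. -/

import Mathlib

open scoped Classical

inductive Letter | x | y
deriving DecidableEq

instance : Fintype Letter := ⟨{Letter.x, Letter.y}, fun a => by cases a <;> simp⟩

/-- x ↦ 1, y ↦ -1 -/
def bar : Letter → ℤ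
  | .x => 1
  | .y => -1

/-- σ swaps the letters x and y. -/
def sigma : Letter → Letter
  | .x => .y
  | .y => .x

/-- the pairing ⟨u,v⟩ : 2 if u = v, -2 otherwise. -/
def pair : Letter → Letter → ℤ := fun u v => if u = v then 2 else -2

noncomputable section

/-- The free associative algebra on the two letters x, y (with its word basis). -/
abbrev V (F : Type*) [Field F] := MonoidAlgebra F (FreeMonoid Letter)

variable {F : Type*} [Field F]

/-- the basis word of V corresponding to a list of letters -/
def wd (w : List Letter) : V F := MonoidAlgebra.single (FreeMonoid.ofList w) 1

/-- the q-shuffle product of two words, by the left recursion -/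
def shuffleWord (q : F) : List Letter → List Letter → V F
  | [], v => wd v
  | u1 :: ut, [] => wd (u1 :: ut)
  | u1 :: ut, v1 :: vt =>
      wd [u1] * shuffleWord q ut (v1 :: vt)
      + q ^ (((u1 :: ut).map (fun a => pair a v1)).sum) •
          (wd [v1] * shuffleWord q (u1 :: ut) vt)
termination_by u v => u.length + v.length

/-- the q-shuffle product on V, extended bilinearly -/
def shuffle (q : F) (a b : V F) : V F :=
  a.coeff.sum fun u cu => b.coeff.sum fun v cv =>
    (cu * cv) • shuffleWord q (FreeMonoid.toList u) (FreeMonoid.toList v)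

/-- the quantum integer [m]_q -/
def qint (q : F) (m : ℤ) : F := (q ^ m - q ^ (-m)) / (q - q⁻¹)

/-- the quantum factorial [m]_q! -/
def qfac (q : F) (m : ℤ) : F := ∏ j ∈ Finset.range m.toNat, qint q ((j : ℤ) + 1)

/-- e_i = ā_1 + ⋯ + ā_i, the i-th elevation of the word w -/
def esum (w : List Letter) (i : ℕ) : ℤ := ((w.take i).map bar).sum

/-- A word is Catalan when all partial sums of bar are nonnegative and the total is zero. -/
def IsCatalan (w : List Letter) : Prop :=
  (∀ i, i ≤ w.length → 0 ≤ esum w i) ∧ esum w w.length = 0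

/-- the coefficient C(w) = ∏_{i=0}^{2n} [1 + e_i]_q -/
def Ccoef (q : F) (w : List Letter) : F :=
  ∏ i ∈ Finset.range (w.length + 1), qint q (1 + esum w i)

/-- the n-th Catalan element C_n = ∑_{w ∈ Cat_n} C(w) w  -/
def catalanElt (q : F) (n : ℕ) : V F :=
  ∑ f : Fin (2 * n) → Letter,
    if IsCatalan (List.ofFn f) then Ccoef q (List.ofFn f) • wd (List.ofFn f) else 0

/-- the antiautomorphism ζ : reverse the word and swap x,y, extended linearly -/
def zeta (a : V F) : V F :=
  a.coeff.sum fun w c =>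
    MonoidAlgebra.single (FreeMonoid.ofList (((FreeMonoid.toList w).map sigma).reverse)) c

/-- The profile of a word: delete from the elevation sequence every interior e_i
    such that e_{i+1}-e_i and e_i-e_{i-1} have the same sign. -/
def profile (w : List Letter) : List ℤ :=
  (List.range (w.length + 1)).filterMap fun i =>
    if i = 0 ∨ i = w.length then some (esum w i)
    else if 0 < (esum w (i + 1) - esum w i) * (esum w i - esum w (i - 1)) then none
    else some (esum w i)

/-- The list (ℓ_0, h_1, ℓ_1, h_2, …, h_r, ℓ_r). -/
def P (r : ℕ) (ℓ h : ℕ → ℤ) : List ℤ :=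
  List.ofFn fun i : Fin (2 * r + 1) =>
    if i.val % 2 = 0 then ℓ (i.val / 2) else h ((i.val + 1) / 2)

/-- the word x^{h_1} y^{h_1-ℓ_1} x^{h_2-ℓ_1} y^{h_2-ℓ_2} ⋯ x^{h_r-ℓ_{r-1}} y^{h_r} -/
def explicitWord (r : ℕ) (ℓ h : ℕ → ℤ) : List Letter :=
  (List.range r).flatMap fun i =>
    List.replicate (h (i + 1) - ℓ i).toNat Letter.x ++
      List.replicate (h (i + 1) - ℓ (i + 1)).toNat Letter.y

/-- C(ℓ_0,h_1,…,h_r,ℓ_r), the ratio of q-factorials attached to a profile. -/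
def Cprof (q : F) (r : ℕ) (ℓ h : ℕ → ℤ) : F :=
  (∏ i ∈ Finset.Icc 1 r, qfac q (h i) * qfac q (h i + 1)) /
    (∏ i ∈ Finset.range (r + 1), qfac q (ℓ i) * qfac q (ℓ i + 1))

end

-- auxiliary lemmas
lemma sigma_sigma (a : Letter) : sigma (sigma a) = a := by cases a <;> rfl

lemma zrev_zrev (w : List Letter) :
    ((((w.map sigma).reverse).map sigma).reverse) = w := by
  rw [List.map_reverse, List.reverse_reverse, List.map_map,
      show sigma ∘ sigma = id from funext sigma_sigma, List.map_id]

lemma sum_drop_bar (w : List Letter) (k : ℕ) :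
    ((w.drop k).map bar).sum = esum w w.length - esum w k := by
  have h2 : (w.map bar).sum = ((w.take k).map bar).sum + ((w.drop k).map bar).sum := by
    conv_lhs => rw [← List.take_append_drop k w]
    rw [List.map_append, List.sum_append]
  unfold esum
  rw [List.take_length]
  linarith

lemma esum_zeta' (w : List Letter) (i : ℕ) :
    esum ((w.map sigma).reverse) i = esum w (w.length - i) - esum w w.length := by
  unfold esum
  rw [List.take_reverse, List.map_reverse, List.sum_reverse, List.length_map,
      ← List.map_drop, List.map_map]
  have hcomp : bar ∘ sigma = fun a => -bar a := by funext a; cases a <;> rfl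
  rw [hcomp]
  have hneg : ∀ l : List Letter, (l.map (fun a => -bar a)).sum = -((l.map bar).sum) := by
    intro l; induction l with
    | nil => simp
    | cons a t ih => simp [ih]; ring
  rw [hneg, sum_drop_bar]
  unfold esum
  rw [List.take_length]
  ring

lemma ofFn_zrev {n : ℕ} (f : Fin n → Letter) :
    List.ofFn (fun i => sigma (f i.rev)) = ((List.ofFn f).map sigma).reverse := by
  rw [List.map_ofFn]
  apply List.ext_getElem
  · simp
  · intro i h1 h2
    simp only [List.getElem_ofFn, List.getElem_reverse, List.getElem_ofFn]
    congr 2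
    simp at h1 h2 ⊢
    ext
    simp [Fin.rev]
    omega

theorem stmt9 {F : Type*} [Field F] (q : F) (hq0 : q ≠ 0)
    (hq : ∀ k : ℕ, 0 < k → q ^ k ≠ 1) :
    (∀ w : List Letter, IsCatalan w →
      IsCatalan ((w.map sigma).reverse) ∧ Ccoef q ((w.map sigma).reverse) = Ccoef q w)
    ∧ ∀ n : ℕ, zeta (catalanElt q n) = (catalanElt q n : V F) := by
  have key : ∀ w : List Letter, IsCatalan w →
      IsCatalan ((w.map sigma).reverse) ∧ Ccoef q ((w.map sigma).reverse) = Ccoef q w := by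
    intro w hw
    have h0 : esum w w.length = 0 := hw.2
    have hk : ∀ i, esum ((w.map sigma).reverse) i = esum w (w.length - i) := by
      intro i; rw [esum_zeta', h0, sub_zero]
    have hlen : ((w.map sigma).reverse).length = w.length := by simp
    constructor
    · constructor
      · intro i _
        rw [hk]
        exact hw.1 _ (Nat.sub_le _ _)
      · rw [hlen, hk, Nat.sub_self]
        simp [esum]
    · unfold Ccoef
      rw [hlen, ← Finset.prod_range_reflect]
      apply Finset.prod_congr rfl
      intro i hi
      simp only [Finset.mem_range] at hi
      rw [hk, show w.length - (w.length + 1 - 1 - i) = i from by omega]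
  refine ⟨key, ?_⟩
  intro n
  set Z : FreeMonoid Letter → FreeMonoid Letter :=
    fun w => FreeMonoid.ofList (((FreeMonoid.toList w).map sigma).reverse) with hZ
  have hmap : ∀ a : V F, zeta a = MonoidAlgebra.mapDomain Z a := fun a => by
    conv_rhs => rw [← MonoidAlgebra.sum_coeff_single a]
    rw [MonoidAlgebra.mapDomain_sum]
    simp only [MonoidAlgebra.mapDomain_single]
    rfl
  set T : (Fin (2 * n) → Letter) → V F := fun f =>
    if IsCatalan (List.ofFn f) then Ccoef q (List.ofFn f) • wd (List.ofFn f) else 0 with hT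
  have hzt : ∀ f : Fin (2 * n) → Letter, zeta (T f) =
      if IsCatalan (List.ofFn f) then
        Ccoef q (List.ofFn f) • wd (((List.ofFn f).map sigma).reverse) else 0 := by
    intro f
    rw [hmap]
    simp only [hT]
    split_ifs with hc
    · rw [MonoidAlgebra.mapDomain_smul]
      congr 1
      unfold wd
      rw [MonoidAlgebra.mapDomain_single]
      rfl
    · exact MonoidAlgebra.mapDomain_zero Z
  set e : (Fin (2 * n) → Letter) → (Fin (2 * n) → Letter) :=
    fun f i => sigma (f i.rev) with he
  have hbij : Function.Bijective e := by
    apply Function.Involutive.bijective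
    intro f
    funext i
    simp [he, sigma_sigma, Fin.rev_rev]
  have hofn : ∀ f : Fin (2 * n) → Letter,
      List.ofFn (e f) = ((List.ofFn f).map sigma).reverse := fun f => ofFn_zrev f
  have hcompat : ∀ f : Fin (2 * n) → Letter, zeta (T f) = T (e f) := by
    intro f
    rw [hzt, hT]
    simp only [hofn]
    by_cases hc : IsCatalan (List.ofFn f)
    · rw [if_pos hc, if_pos (key _ hc).1, (key _ hc).2]
    · rw [if_neg hc, if_neg]
      intro hc2
      have h3 := (key _ hc2).1
      rw [zrev_zrev] at h3
      exact hc h3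
  show zeta (∑ f : Fin (2 * n) → Letter, T f) = ∑ f : Fin (2 * n) → Letter, T f
  rw [hmap, show MonoidAlgebra.mapDomain Z (∑ f, T f) = ∑ f, MonoidAlgebra.mapDomain Z (T f) from
    map_sum (AddMonoidHom.mk' (MonoidAlgebra.mapDomain Z) (MonoidAlgebra.mapDomain_add Z) : V F →+ V F)
    T Finset.univ]
  calc ∑ f : Fin (2 * n) → Letter, MonoidAlgebra.mapDomain Z (T f)
      = ∑ f : Fin (2 * n) → Letter, zeta (T f) := by
        simp only [hmap]
    _ = ∑ f : Fin (2 * n) → Letter, T f :=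
        Fintype.sum_bijective e hbij _ _ hcompat
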